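/- Every cycle C in the unweighted diamond graph D_n is a principal cycle of one of the subdiamonds of D_n, and every principal cycle of a subdiamond of height 2^t has length 2^{t+1}. -/

import Mathlib

/-- A graph given by a set of oriented edges. -/
structure EGraph where
  V : Type
  E : Type
  src : E → V
  tgt : E → V

/-- The diamond graphs `D_n`: `D_0` is a single edge, and `D_{n+1}` is obtained from
`D_n` by replacing each edge `uv` by a quadrilateral `u, a, v, b` (two new vertices
per edge, encoded as `(e, false)` and `(e, true)`). -/
def diamond : ℕ → EGraph
  | 0 => { V := Bool, E := Unit, src := fun _ => false, tgt := fun _ => true }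
  | n + 1 =>
    let G := diamond n
    { V := G.V ⊕ (G.E × Bool)
      E := G.E × Fin 4
      src := fun p =>
        if p.2.val = 0 then Sum.inl (G.src p.1)
        else if p.2.val = 1 then Sum.inr (p.1, false)
        else if p.2.val = 2 then Sum.inl (G.src p.1)
        else Sum.inr (p.1, true)
      tgt := fun p =>
        if p.2.val = 0 then Sum.inr (p.1, false)
        else if p.2.val = 1 then Sum.inl (G.tgt p.1)
        else if p.2.val = 2 then Sum.inr (p.1, true)
        else Sum.inl (G.tgt p.1) }

/-- The Laakso graphs `L_n`: `L_0` is a single edge, and `L_{n+1}` is obtained from `L_n`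
by replacing each edge `uv` by a copy of the pattern graph `L_1`.  In the pattern with
endpoints `u, v` and internal vertices `a = 0, b = 1, c = 2, d = 3` (encoded as
`(e, 0), …, (e, 3)`), the six edges are `u-a, a-b, a-c, b-d, c-d, d-v`. -/
def laakso : ℕ → EGraph
  | 0 => { V := Bool, E := Unit, src := fun _ => false, tgt := fun _ => true }
  | n + 1 =>
    let G := laakso n
    { V := G.V ⊕ (G.E × Fin 4)
      E := G.E × Fin 6
      src := fun p =>
        if p.2.val = 0 then Sum.inl (G.src p.1)
        else if p.2.val = 1 then Sum.inr (p.1, 0)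
        else if p.2.val = 2 then Sum.inr (p.1, 0)
        else if p.2.val = 3 then Sum.inr (p.1, 1)
        else if p.2.val = 4 then Sum.inr (p.1, 2)
        else Sum.inr (p.1, 3)
      tgt := fun p =>
        if p.2.val = 0 then Sum.inr (p.1, 0)
        else if p.2.val = 1 then Sum.inr (p.1, 1)
        else if p.2.val = 2 then Sum.inr (p.1, 2)
        else if p.2.val = 3 then Sum.inr (p.1, 3)
        else if p.2.val = 4 then Sum.inr (p.1, 3)
        else Sum.inl (G.tgt p.1) }

/-- The simple graph underlying an `EGraph`. -/
def EGraph.toSimpleGraph (G : EGraph) : SimpleGraph G.V where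
  Adj u v := u ≠ v ∧ ∃ e, (G.src e = u ∧ G.tgt e = v) ∨ (G.src e = v ∧ G.tgt e = u)
  symm := ⟨fun _ _ h => ⟨Ne.symm h.1, h.2.elim fun e he => ⟨e, he.symm⟩⟩⟩
  loopless := ⟨fun _ h => h.1 rfl⟩

/-- The unweighted diamond graph `D_n`; its shortest path metric is
`(DiamondGraph n).dist`. -/
abbrev DiamondGraph (n : ℕ) : SimpleGraph (diamond n).V := (diamond n).toSimpleGraph

/-- The unweighted Laakso graph `L_n`; its shortest path metric is
`(LaaksoGraph n).dist`. -/
abbrev LaaksoGraph (n : ℕ) : SimpleGraph (laakso n).V := (laakso n).toSimpleGraph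

/-- The set of edges of `D_{k+j}` of the subdiamond that evolved from the edge `e`
of `D_k`. -/
def subdiaEdges : (k j : ℕ) → (diamond k).E → Set ((diamond (k + j)).E)
  | _, 0, e => {e}
  | k, j + 1, e => {p : (diamond (k + j)).E × Fin 4 | p.1 ∈ subdiaEdges k j e}

/-- The natural inclusion of the vertices of `D_k` into the vertices of `D_{k+j}`. -/
def inclV : (k j : ℕ) → (diamond k).V → (diamond (k + j)).V
  | _, 0, v => v
  | k, j + 1, v => Sum.inl (inclV k j v)

/-- The top vertex of the subdiamond of `D_{k+j}` that evolved from the edge `e` of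
`D_k`. -/
def subdiaTop (k j : ℕ) (e : (diamond k).E) : (diamond (k + j)).V :=
  inclV k j ((diamond k).tgt e)

/-- The bottom vertex of the subdiamond of `D_{k+j}` that evolved from the edge `e` of
`D_k`. -/
def subdiaBot (k j : ℕ) (e : (diamond k).E) : (diamond (k + j)).V :=
  inclV k j ((diamond k).src e)

/-- The leftmost vertex of the subdiamond of `D_{k+(j+1)}` that evolved from the edge `e`
of `D_k`: the first of the two vertices created in the first subdivision of `e`. -/
def subdiaLeft : (k j : ℕ) → (diamond k).E → (diamond (k + (j + 1))).V
  | _, 0, e => Sum.inr (e, false)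
  | k, j + 1, e => Sum.inl (subdiaLeft k j e)

/-- The rightmost vertex of the subdiamond of `D_{k+(j+1)}` that evolved from the edge `e`
of `D_k`: the second of the two vertices created in the first subdivision of `e`. -/
def subdiaRight : (k j : ℕ) → (diamond k).E → (diamond (k + (j + 1))).V
  | _, 0, e => Sum.inr (e, true)
  | k, j + 1, e => Sum.inl (subdiaRight k j e)

/-- A cycle in a graph: a connected subgraph in which every vertex has degree `2`. -/
def IsCycleSubgraph {V : Type} {G : SimpleGraph V} (H : G.Subgraph) : Prop :=
  H.Connected ∧ ∀ v ∈ H.verts, (H.neighborSet v).ncard = 2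

/-- `C` is a principal cycle of the subdiamond of `D_{k+(j+1)}` evolved from the edge `e`
of `D_k`: a cycle, all of whose edges lie in the subdiamond, passing through the top and
the bottom of the subdiamond and also through its leftmost and rightmost vertices (so it
consists of a top–bottom path through the leftmost vertex and a bottom–top path through
the rightmost vertex). -/
def IsPrincipalCycle (k j : ℕ) (e : (diamond k).E)
    (C : (DiamondGraph (k + (j + 1))).Subgraph) : Prop :=
  IsCycleSubgraph C ∧
  (∀ u v, C.Adj u v → ∃ e' ∈ subdiaEdges k (j + 1) e,
    ((diamond (k + (j + 1))).src e' = u ∧ (diamond (k + (j + 1))).tgt e' = v) ∨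
    ((diamond (k + (j + 1))).src e' = v ∧ (diamond (k + (j + 1))).tgt e' = u)) ∧
  subdiaTop k (j + 1) e ∈ C.verts ∧ subdiaBot k (j + 1) e ∈ C.verts ∧
  subdiaLeft k j e ∈ C.verts ∧ subdiaRight k j e ∈ C.verts

attribute [reducible] diamond

lemma tsg_adj (G : EGraph) (x y : G.V) : G.toSimpleGraph.Adj x y ↔ x ≠ y ∧ ∃ e, (G.src e = x ∧ G.tgt e = y) ∨ (G.src e = y ∧ G.tgt e = x) := Iff.rfl
lemma dsrc (n : ℕ) (f : (diamond n).E) (i : Fin 4) :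
    (diamond (n+1)).src (f, i) =
      if i.val = 0 then Sum.inl ((diamond n).src f)
      else if i.val = 1 then Sum.inr (f, false)
      else if i.val = 2 then Sum.inl ((diamond n).src f)
      else Sum.inr (f, true) := rfl
lemma dtgt (n : ℕ) (f : (diamond n).E) (i : Fin 4) :
    (diamond (n+1)).tgt (f, i) =
      if i.val = 0 then Sum.inr (f, false)
      else if i.val = 1 then Sum.inl ((diamond n).tgt f)
      else if i.val = 2 then Sum.inr (f, true)
      else Sum.inl ((diamond n).tgt f) := rfl
lemma src_ne_tgt : ∀ (n : ℕ) (e : (diamond n).E), (diamond n).src e ≠ (diamond n).tgt e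
  | 0, _ => by simp [diamond]
  | n+1, (f, i) => by
    rw [dsrc, dtgt]
    rcases (by omega : i.val = 0 ∨ i.val = 1 ∨ i.val = 2 ∨ i.val = 3) with h|h|h|h <;> simp [h]
@[simp] lemma dinl_inj {n : ℕ} {u v : (diamond n).V} :
    @Eq ((diamond (n+1)).V) (Sum.inl u) (Sum.inl v) ↔ u = v :=
  ⟨fun h => by injection h, fun h => h ▸ rfl⟩

@[simp] lemma dinr_inj {n : ℕ} {p q : (diamond n).E × Bool} :
    @Eq ((diamond (n+1)).V) (Sum.inr p) (Sum.inr q) ↔ p = q :=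
  ⟨fun h => by injection h, fun h => h ▸ rfl⟩

@[simp] lemma dinl_ne_inr {n : ℕ} {u : (diamond n).V} {p : (diamond n).E × Bool} :
    ¬ @Eq ((diamond (n+1)).V) (Sum.inl u) (Sum.inr p) := fun h => by injection h

@[simp] lemma dinr_ne_inl {n : ℕ} {u : (diamond n).V} {p : (diamond n).E × Bool} :
    ¬ @Eq ((diamond (n+1)).V) (Sum.inr p) (Sum.inl u) := fun h => by injection h

@[simp] lemma dprod_ext {n : ℕ} {f f' : (diamond n).E} {i i' : Fin 4} :
    @Eq ((diamond (n+1)).E) (f, i) (f', i') ↔ f = f' ∧ i = i' :=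
  ⟨fun h => by injection h with h1 h2; exact ⟨h1, h2⟩, fun ⟨h1, h2⟩ => h1 ▸ h2 ▸ rfl⟩

@[simp] lemma dpair_ext {n : ℕ} {f f' : (diamond n).E} {b b' : Bool} :
    (@Eq ((diamond n).E × Bool) (f, b) (f', b')) ↔ f = f' ∧ b = b' :=
  ⟨fun h => by injection h with h1 h2; exact ⟨h1, h2⟩, fun ⟨h1, h2⟩ => h1 ▸ h2 ▸ rfl⟩
/-- Inversion for adjacency in `D_{n+1}`. -/
lemma adj_succ {n : ℕ} {x y : (diamond (n+1)).V} (h : (DiamondGraph (n+1)).Adj x y) :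
    ∃ f b, ((x = Sum.inl ((diamond n).src f) ∨ x = Sum.inl ((diamond n).tgt f)) ∧ y = Sum.inr (f, b)) ∨
           ((y = Sum.inl ((diamond n).src f) ∨ y = Sum.inl ((diamond n).tgt f)) ∧ x = Sum.inr (f, b)) := by
  obtain ⟨hne, e, he⟩ := (tsg_adj _ x y).1 h
  obtain ⟨f, i⟩ := e
  rw [dsrc, dtgt] at he
  rcases (by omega : i.val = 0 ∨ i.val = 1 ∨ i.val = 2 ∨ i.val = 3) with hi|hi|hi|hi <;>
    simp only [hi] at he <;> simp at he <;>
  · rcases he with ⟨h1, h2⟩ | ⟨h1, h2⟩ <;> exact ⟨f, _, by tauto⟩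

lemma adj_src {n : ℕ} (f : (diamond n).E) (b : Bool) :
    (DiamondGraph (n+1)).Adj (Sum.inl ((diamond n).src f)) (Sum.inr (f, b)) := by
  refine (tsg_adj _ _ _).2 ⟨by simp, (f, if b then (⟨2, by omega⟩ : Fin 4) else ⟨0, by omega⟩), Or.inl ?_⟩
  cases b <;> exact ⟨rfl, rfl⟩

lemma adj_tgt {n : ℕ} (f : (diamond n).E) (b : Bool) :
    (DiamondGraph (n+1)).Adj (Sum.inl ((diamond n).tgt f)) (Sum.inr (f, b)) := by
  refine (tsg_adj _ _ _).2 ⟨by simp, (f, if b then (⟨3, by omega⟩ : Fin 4) else ⟨1, by omega⟩), Or.inr ?_⟩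
  cases b <;> exact ⟨rfl, rfl⟩

lemma not_adj_inl {n : ℕ} (u v : (diamond n).V) :
    ¬ (DiamondGraph (n+1)).Adj (Sum.inl u) (Sum.inl v) := by
  intro h
  obtain ⟨f, b, h⟩ := adj_succ h
  rcases h with ⟨-, h⟩ | ⟨-, h⟩ <;> exact absurd h (by simp)

lemma not_adj_inr {n : ℕ} (p q : (diamond n).E × Bool) :
    ¬ (DiamondGraph (n+1)).Adj (Sum.inr p) (Sum.inr q) := by
  intro h
  obtain ⟨f, b, h⟩ := adj_succ h
  rcases h with ⟨h, -⟩ | ⟨h, -⟩ <;> rcases h with h|h <;> exact absurd h (by simp)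

/-- Neighbors of `inr (f, b)` in `D_{n+1}` are exactly the two endpoints of `f`. -/
lemma adj_inr_iff {n : ℕ} {f : (diamond n).E} {b : Bool} {y : (diamond (n+1)).V} :
    (DiamondGraph (n+1)).Adj (Sum.inr (f, b)) y ↔
      y = Sum.inl ((diamond n).src f) ∨ y = Sum.inl ((diamond n).tgt f) := by
  constructor
  · intro h
    obtain ⟨g, c, hc⟩ := adj_succ h
    rcases hc with ⟨h1, h2⟩ | ⟨h1, h2⟩
    · rcases h1 with h1|h1 <;> simp_all
    · obtain ⟨rfl, rfl⟩ : f = g ∧ b = c := Prod.mk.injEq .. ▸ Sum.inr.inj h2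
      exact h1
  · rintro (rfl | rfl)
    · exact (adj_src f b).symm
    · exact (adj_tgt f b).symm

/-- Adjacency of `inl u` in `D_{n+1}`. -/
lemma adj_inl_iff {n : ℕ} {u : (diamond n).V} {y : (diamond (n+1)).V} :
    (DiamondGraph (n+1)).Adj (Sum.inl u) y ↔
      ∃ f b, y = Sum.inr (f, b) ∧ (u = (diamond n).src f ∨ u = (diamond n).tgt f) := by
  constructor
  · intro h
    obtain ⟨f, b, hc⟩ := adj_succ h
    rcases hc with ⟨h1, h2⟩ | ⟨h1, h2⟩
    · exact ⟨f, b, h2, by rcases h1 with h1|h1 <;> [left; right] <;> exact Sum.inl.inj h1⟩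
    · simp at h2
  · rintro ⟨f, b, rfl, (rfl | rfl)⟩
    · exact adj_src f b
    · exact adj_tgt f b
/-- No parallel edges: an edge of `D_n` is determined by its endpoints. -/
lemma edge_eq_of_ends : ∀ (n : ℕ) (e e' : (diamond n).E),
    (diamond n).src e = (diamond n).src e' → (diamond n).tgt e = (diamond n).tgt e' → e = e'
  | 0, _, _, _, _ => rfl
  | n+1, (f, i), (f', i'), h1, h2 => by
    rw [dsrc, dsrc] at h1
    rw [dtgt, dtgt] at h2
    rcases (by omega : i.val = 0 ∨ i.val = 1 ∨ i.val = 2 ∨ i.val = 3) with hi|hi|hi|hi <;>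
    rcases (by omega : i'.val = 0 ∨ i'.val = 1 ∨ i'.val = 2 ∨ i'.val = 3) with hi'|hi'|hi'|hi' <;>
    simp only [hi, hi'] at h1 h2 <;> simp at h1 h2 <;> subst_vars <;> exact Prod.ext rfl (Fin.ext (hi.trans hi'.symm))

/-- No pair of edges with flipped endpoints. -/
lemma edge_no_flip : ∀ (n : ℕ) (e e' : (diamond n).E),
    (diamond n).src e = (diamond n).tgt e' → (diamond n).tgt e = (diamond n).src e' → False
  | 0, _, _, h1, _ => by simp [diamond] at h1
  | n+1, (f, i), (f', i'), h1, h2 => by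
    rw [dsrc, dtgt] at h1
    rw [dtgt, dsrc] at h2
    rcases (by omega : i.val = 0 ∨ i.val = 1 ∨ i.val = 2 ∨ i.val = 3) with hi|hi|hi|hi <;>
    rcases (by omega : i'.val = 0 ∨ i'.val = 1 ∨ i'.val = 2 ∨ i'.val = 3) with hi'|hi'|hi'|hi' <;>
    simp_all <;> exact src_ne_tgt n f (by simp_all)
noncomputable section
open Classical

/-- The other endpoint of an edge. -/
def otherEnd (n : ℕ) (g : (diamond n).E) (v : (diamond n).V) : (diamond n).V :=
  if v = (diamond n).src g then (diamond n).tgt g else (diamond n).src g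

lemma otherEnd_src (n g) : otherEnd n g ((diamond n).src g) = (diamond n).tgt g := if_pos rfl

lemma otherEnd_tgt (n g) : otherEnd n g ((diamond n).tgt g) = (diamond n).src g :=
  if_neg (Ne.symm (src_ne_tgt n g))

lemma otherEnd_ne {n g v} (h : v = (diamond n).src g ∨ v = (diamond n).tgt g) :
    otherEnd n g v ≠ v := by
  rcases h with rfl | rfl
  · rw [otherEnd_src]; exact (src_ne_tgt n g).symm
  · rw [otherEnd_tgt]; exact src_ne_tgt n g

lemma otherEnd_spec {n g v} (h : v = (diamond n).src g ∨ v = (diamond n).tgt g) :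
    ((diamond n).src g = v ∧ (diamond n).tgt g = otherEnd n g v) ∨
    ((diamond n).src g = otherEnd n g v ∧ (diamond n).tgt g = v) := by
  rcases h with rfl | rfl
  · rw [otherEnd_src]; exact Or.inl ⟨rfl, rfl⟩
  · rw [otherEnd_tgt]; exact Or.inr ⟨rfl, rfl⟩

lemma eq_otherEnd {n g v z}
    (hor : ((diamond n).src g = v ∧ (diamond n).tgt g = z) ∨
           ((diamond n).src g = z ∧ (diamond n).tgt g = v)) : z = otherEnd n g v := by
  rcases hor with ⟨h1, h2⟩ | ⟨h1, h2⟩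
  · subst h1; subst h2; rw [otherEnd_src]
  · subst h1; subst h2; rw [otherEnd_tgt]

lemma otherEnd_inj {n g g' v} (hv : v = (diamond n).src g ∨ v = (diamond n).tgt g)
    (hv' : v = (diamond n).src g' ∨ v = (diamond n).tgt g')
    (heq : otherEnd n g v = otherEnd n g' v) : g = g' := by
  rcases hv with h | h <;> rcases hv' with h' | h'
  · exact edge_eq_of_ends n g g' (h ▸ h'.symm ▸ rfl)
      (by rw [← otherEnd_src n g, ← otherEnd_src n g', ← h, ← h', heq])
  · exfalso
    refine edge_no_flip n g g' (h ▸ h' ▸ rfl) ?_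
    rw [← otherEnd_src n g, ← otherEnd_tgt n g', ← h, ← h', heq]
  · exfalso
    refine edge_no_flip n g' g (h' ▸ h ▸ rfl) ?_
    rw [← otherEnd_src n g', ← otherEnd_tgt n g, ← h, ← h', heq]
  · exact edge_eq_of_ends n g g'
      (by rw [← otherEnd_tgt n g, ← otherEnd_tgt n g', ← h, ← h', heq])
      (h ▸ h'.symm ▸ rfl)

/-- Fintype instances. -/
def dFintypeE : ∀ n, Fintype (diamond n).E
  | 0 => inferInstanceAs (Fintype Unit)
  | n+1 => letI := dFintypeE n; inferInstanceAs (Fintype ((diamond n).E × Fin 4))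

def dFintypeV : ∀ n, Fintype (diamond n).V
  | 0 => inferInstanceAs (Fintype Bool)
  | n+1 => letI := dFintypeV n; letI := dFintypeE n
           inferInstanceAs (Fintype ((diamond n).V ⊕ ((diamond n).E × Bool)))

attribute [instance] dFintypeE dFintypeV

/-- In a cycle, a subdivision vertex `inr (f, b)` is joined to both endpoints of `f`. -/
lemma cyc_adj_inr {n : ℕ} {C : (DiamondGraph (n+1)).Subgraph} (hC : IsCycleSubgraph C)
    {f : (diamond n).E} {b : Bool} (hm : Sum.inr (f, b) ∈ C.verts) :
    C.Adj (Sum.inr (f, b)) (Sum.inl ((diamond n).src f)) ∧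
    C.Adj (Sum.inr (f, b)) (Sum.inl ((diamond n).tgt f)) := by
  have hsub : C.neighborSet (Sum.inr (f, b)) ⊆
      {Sum.inl ((diamond n).src f), Sum.inl ((diamond n).tgt f)} := by
    intro y hy
    rcases adj_inr_iff.1 (C.adj_sub hy) with h | h <;> simp [h]
  have hpair : ({Sum.inl ((diamond n).src f), Sum.inl ((diamond n).tgt f)} :
      Set ((diamond (n+1)).V)).ncard = 2 :=
    Set.ncard_pair (by simp [src_ne_tgt n f])
  have heq := Set.eq_of_subset_of_ncard_le hsub (by rw [hC.2 _ hm, hpair]) (Set.toFinite _)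
  constructor
  · show _ ∈ C.neighborSet _
    rw [heq]; exact Set.mem_insert _ _
  · show _ ∈ C.neighborSet _
    rw [heq]; exact Set.mem_insert_of_mem _ rfl

/-- In a cycle, a vertex `inl v` has exactly two neighbors, both subdivision vertices. -/
lemma cyc_adj_inl {n : ℕ} {C : (DiamondGraph (n+1)).Subgraph} (hC : IsCycleSubgraph C)
    {v : (diamond n).V} (hm : Sum.inl v ∈ C.verts) :
    ∃ f b f' b', ((f, b) : (diamond n).E × Bool) ≠ (f', b') ∧
      C.neighborSet (Sum.inl v) = {Sum.inr (f, b), Sum.inr (f', b')} ∧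
      (v = (diamond n).src f ∨ v = (diamond n).tgt f) ∧
      (v = (diamond n).src f' ∨ v = (diamond n).tgt f') := by
  obtain ⟨a, a', hne, hset⟩ := Set.ncard_eq_two.1 (hC.2 _ hm)
  have ha : C.Adj (Sum.inl v) a := by
    show a ∈ C.neighborSet _; rw [hset]; exact Set.mem_insert _ _
  have ha' : C.Adj (Sum.inl v) a' := by
    show a' ∈ C.neighborSet _; rw [hset]; exact Set.mem_insert_of_mem _ rfl
  obtain ⟨f, b, rfl, hvf⟩ := adj_inl_iff.1 (C.adj_sub ha)
  obtain ⟨f', b', rfl, hvf'⟩ := adj_inl_iff.1 (C.adj_sub ha')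
  exact ⟨f, b, f', b', fun h => hne (by rw [h]), hset, hvf, hvf'⟩

/-- Connected subgraph: a set closed under adjacency containing a vertex contains all. -/
lemma verts_subset_of_closed {V : Type} {G : SimpleGraph V} {H : G.Subgraph}
    (hc : H.Connected) (S : Set V) (hcl : ∀ x ∈ S, ∀ y, H.Adj x y → y ∈ S)
    {x0 : V} (hx0 : x0 ∈ S) (hx0v : x0 ∈ H.verts) : H.verts ⊆ S := by
  have key : ∀ (a b : H.verts), H.coe.Walk a b → (a : V) ∈ S → (b : V) ∈ S := by
    intro a b p
    induction p with
    | nil => exact id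
    | cons h p ih => exact fun ha => ih (hcl _ ha _ h)
  intro y hy
  obtain ⟨p⟩ := hc.coe ⟨x0, hx0v⟩ ⟨y, hy⟩
  exact key _ _ p hx0
/-- If a cycle contains both subdivision vertices of an edge `f`, it is the quadrilateral
of `f`. -/
lemma quad_verts {n : ℕ} {C : (DiamondGraph (n+1)).Subgraph} (hC : IsCycleSubgraph C)
    {f : (diamond n).E} (h0 : Sum.inr (f, false) ∈ C.verts)
    (h1 : Sum.inr (f, true) ∈ C.verts) :
    C.verts = {Sum.inl ((diamond n).src f), Sum.inl ((diamond n).tgt f),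
      Sum.inr (f, false), Sum.inr (f, true)} := by
  set S : Set ((diamond (n+1)).V) := {Sum.inl ((diamond n).src f),
    Sum.inl ((diamond n).tgt f), Sum.inr (f, false), Sum.inr (f, true)} with hS
  have hnbl : ∀ u : (diamond n).V, Sum.inl u ∈ C.verts →
      ((u = (diamond n).src f ∨ u = (diamond n).tgt f)) →
      C.neighborSet (Sum.inl u) = {Sum.inr (f, false), Sum.inr (f, true)} := by
    intro u hu huf
    have hadj0 : C.Adj (Sum.inl u) (Sum.inr (f, false)) := by
      rcases huf with rfl | rfl
      · exact ((cyc_adj_inr hC h0).1).symm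
      · exact ((cyc_adj_inr hC h0).2).symm
    have hadj1 : C.Adj (Sum.inl u) (Sum.inr (f, true)) := by
      rcases huf with rfl | rfl
      · exact ((cyc_adj_inr hC h1).1).symm
      · exact ((cyc_adj_inr hC h1).2).symm
    have hsub : ({Sum.inr (f, false), Sum.inr (f, true)} : Set ((diamond (n+1)).V)) ⊆
        C.neighborSet (Sum.inl u) := by
      intro y hy; rcases hy with rfl | hy
      · exact hadj0
      · rw [Set.mem_singleton_iff] at hy; subst hy; exact hadj1
    have hpair : ({Sum.inr (f, false), Sum.inr (f, true)} :
        Set ((diamond (n+1)).V)).ncard = 2 := Set.ncard_pair (by simp)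
    exact (Set.eq_of_subset_of_ncard_le hsub (by rw [hpair, hC.2 _ hu]) (Set.toFinite _)).symm
  apply Set.Subset.antisymm
  · refine verts_subset_of_closed hC.1 S ?_ (by simp [hS]) h0
    intro x hx y hxy
    rcases hx with rfl | rfl | rfl | hx
    · have : y ∈ C.neighborSet (Sum.inl ((diamond n).src f)) := hxy
      rw [hnbl _ (C.edge_vert hxy) (Or.inl rfl)] at this
      rcases this with rfl | hy
      · simp [hS]
      · rw [Set.mem_singleton_iff] at hy; subst hy; simp [hS]
    · have : y ∈ C.neighborSet (Sum.inl ((diamond n).tgt f)) := hxy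
      rw [hnbl _ (C.edge_vert hxy) (Or.inr rfl)] at this
      rcases this with rfl | hy
      · simp [hS]
      · rw [Set.mem_singleton_iff] at hy; subst hy; simp [hS]
    · rcases adj_inr_iff.1 (C.adj_sub hxy) with rfl | rfl <;> simp [hS]
    · rw [Set.mem_singleton_iff] at hx; subst hx
      rcases adj_inr_iff.1 (C.adj_sub hxy) with rfl | rfl <;> simp [hS]
  · intro x hx
    rcases hx with rfl | rfl | rfl | hx
    · exact C.edge_vert ((cyc_adj_inr hC h0).1).symm
    · exact C.edge_vert ((cyc_adj_inr hC h0).2).symm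
    · exact h0
    · rw [Set.mem_singleton_iff] at hx; subst hx; exact h1

/-- The projection of a subgraph of `D_{n+1}` to a subgraph of `D_n`. -/
def projSub {n : ℕ} (C : (DiamondGraph (n+1)).Subgraph) : (DiamondGraph n).Subgraph where
  verts := {v | Sum.inl v ∈ C.verts}
  Adj v w := v ≠ w ∧ Sum.inl v ∈ C.verts ∧ Sum.inl w ∈ C.verts ∧
    ∃ f b, Sum.inr (f, b) ∈ C.verts ∧
      (((diamond n).src f = v ∧ (diamond n).tgt f = w) ∨
       ((diamond n).src f = w ∧ (diamond n).tgt f = v))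
  adj_sub := fun ⟨hne, _, _, f, _, _, h⟩ => ⟨hne, f, h⟩
  edge_vert := fun h => h.2.1
  symm := ⟨fun v w ⟨hne, hv, hw, f, b, hm, hor⟩ =>
    ⟨hne.symm, hw, hv, f, b, hm, hor.symm⟩⟩

/-- Membership transfer. -/
lemma projSub_verts {n : ℕ} (C : (DiamondGraph (n+1)).Subgraph) (v : (diamond n).V) :
    v ∈ (projSub C).verts ↔ Sum.inl v ∈ C.verts := Iff.rfl

/-- Non-quadrilateral hypothesis. -/
def NonQuad {n : ℕ} (C : (DiamondGraph (n+1)).Subgraph) : Prop :=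
  ∀ f : (diamond n).E, ¬ (Sum.inr (f, false) ∈ C.verts ∧ Sum.inr (f, true) ∈ C.verts)

/-- The neighbors of `v` in the projection. -/
lemma projSub_nbhd {n : ℕ} {C : (DiamondGraph (n+1)).Subgraph} (hC : IsCycleSubgraph C)
    (hnq : NonQuad C) {v : (diamond n).V} (hv : Sum.inl v ∈ C.verts) :
    ∃ f b f' b', f ≠ f' ∧ Sum.inr (f, b) ∈ C.verts ∧ Sum.inr (f', b') ∈ C.verts ∧
      (v = (diamond n).src f ∨ v = (diamond n).tgt f) ∧
      (v = (diamond n).src f' ∨ v = (diamond n).tgt f') ∧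
      (projSub C).neighborSet v = {otherEnd n f v, otherEnd n f' v} := by
  obtain ⟨f, b, f', b', hne, hset, hvf, hvf'⟩ := cyc_adj_inl hC hv
  have hmf : Sum.inr (f, b) ∈ C.verts := by
    have h1 : C.Adj (Sum.inl v) (Sum.inr (f, b)) := by
      show Sum.inr (f, b) ∈ C.neighborSet _
      rw [hset]; exact Set.mem_insert _ _
    exact C.edge_vert h1.symm
  have hmf' : Sum.inr (f', b') ∈ C.verts := by
    have h1 : C.Adj (Sum.inl v) (Sum.inr (f', b')) := by
      show Sum.inr (f', b') ∈ C.neighborSet _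
      rw [hset]; exact Set.mem_insert_of_mem _ rfl
    exact C.edge_vert h1.symm
  have hff' : f ≠ f' := by
    rintro rfl
    have hbb : b ≠ b' := fun h => hne (by rw [h])
    refine hnq f ⟨?_, ?_⟩ <;> rcases b <;> rcases b' <;> simp_all
  refine ⟨f, b, f', b', hff', hmf, hmf', hvf, hvf', ?_⟩
  apply Set.Subset.antisymm
  · rintro z ⟨hzne, _, hz, g, c, hgm, hor⟩
    have hvg : v = (diamond n).src g ∨ v = (diamond n).tgt g := by
      rcases hor with ⟨h1, _⟩ | ⟨_, h2⟩
      · exact Or.inl h1.symm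
      · exact Or.inr h2.symm
    have hadj : C.Adj (Sum.inl v) (Sum.inr (g, c)) := by
      rcases hvg with rfl | rfl
      · exact ((cyc_adj_inr hC hgm).1).symm
      · exact ((cyc_adj_inr hC hgm).2).symm
    have : Sum.inr (g, c) ∈ C.neighborSet (Sum.inl v) := hadj
    rw [hset] at this
    have hz_eq : z = otherEnd n g v := eq_otherEnd hor
    rcases this with h | h
    · have hgf : g = f := (dpair_ext.1 (dinr_inj.1 h)).1
      subst hgf; simp [hz_eq]
    · rw [Set.mem_singleton_iff] at h
      have hgf : g = f' := (dpair_ext.1 (dinr_inj.1 h)).1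
      subst hgf; simp [hz_eq]
  · intro z hz
    have hmk : ∀ (g : (diamond n).E) (c : Bool), Sum.inr (g, c) ∈ C.verts →
        (v = (diamond n).src g ∨ v = (diamond n).tgt g) →
        (projSub C).Adj v (otherEnd n g v) := by
      intro g c hgm hvg
      refine ⟨(otherEnd_ne hvg).symm, hv, ?_, g, c, hgm, otherEnd_spec hvg⟩
      rcases hvg with rfl | rfl
      · rw [otherEnd_src]; exact C.edge_vert ((cyc_adj_inr hC hgm).2).symm
      · rw [otherEnd_tgt]; exact C.edge_vert ((cyc_adj_inr hC hgm).1).symm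
    rcases hz with rfl | hz
    · exact hmk f b hmf hvf
    · rw [Set.mem_singleton_iff] at hz; subst hz; exact hmk f' b' hmf' hvf'

lemma projSub_degree {n : ℕ} {C : (DiamondGraph (n+1)).Subgraph} (hC : IsCycleSubgraph C)
    (hnq : NonQuad C) {v : (diamond n).V} (hv : v ∈ (projSub C).verts) :
    ((projSub C).neighborSet v).ncard = 2 := by
  obtain ⟨f, b, f', b', hff', _, _, hvf, hvf', hset⟩ := projSub_nbhd hC hnq hv
  rw [hset]
  exact Set.ncard_pair (fun h => hff' (otherEnd_inj hvf hvf' h))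
/-- Walk projection: reachability descends along `projSub`. -/
lemma projSub_reach {n : ℕ} {C : (DiamondGraph (n+1)).Subgraph} :
    ∀ (N : ℕ) (x y : C.verts) (p : C.coe.Walk x y), p.length ≤ N →
      ∀ (v w : (diamond n).V) (hv : v ∈ (projSub C).verts) (hw : w ∈ (projSub C).verts),
        (x : (diamond (n+1)).V) = Sum.inl v → (y : (diamond (n+1)).V) = Sum.inl w →
        (projSub C).coe.Reachable ⟨v, hv⟩ ⟨w, hw⟩ := by
  intro N
  induction N with
  | zero =>
    intro x y p hlen v w hv hw hx hy
    cases p with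
    | nil =>
      have : v = w := dinl_inj.1 (hx ▸ hy ▸ rfl)
      subst this
      rfl
    | cons h q => simp [SimpleGraph.Walk.length_cons] at hlen
  | succ N ih =>
    intro x y p hlen v w hv hw hx hy
    cases p with
    | nil =>
      have : v = w := dinl_inj.1 (hx ▸ hy ▸ rfl)
      subst this
      rfl
    | @cons _ z _ h q =>
      have hadj : C.Adj (↑x) (↑z) := h
      rw [hx] at hadj
      obtain ⟨g, c, hz, hvg⟩ := adj_inl_iff.1 (C.adj_sub hadj)
      cases q with
      | nil =>
        exact absurd (hz.symm.trans hy) (dinr_ne_inl (n := n))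
      | @cons _ z2 _ h2 q2 =>
        have hadj2 : C.Adj (↑z) (↑z2) := h2
        rw [hz] at hadj2
        obtain ⟨u, hz2, hug⟩ : ∃ u, (z2 : (diamond (n+1)).V) = Sum.inl u ∧
            (u = (diamond n).src g ∨ u = (diamond n).tgt g) := by
          rcases adj_inr_iff.1 (C.adj_sub hadj2) with h' | h'
          · exact ⟨_, h', Or.inl rfl⟩
          · exact ⟨_, h', Or.inr rfl⟩
        have hu : u ∈ (projSub C).verts := by
          show Sum.inl u ∈ C.verts
          rw [← hz2]; exact z2.2
        have hlen2 : q2.length ≤ N := by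
          simp [SimpleGraph.Walk.length_cons] at hlen; omega
        have hr2 := ih z2 y q2 hlen2 u w hu hw hz2 hy
        rcases eq_or_ne v u with rfl | hvu
        · exact hr2
        · refine SimpleGraph.Reachable.trans (SimpleGraph.Adj.reachable ?_) hr2
          show (projSub C).Adj v u
          have hgm : Sum.inr (g, c) ∈ C.verts := by rw [← hz]; exact z.2
          refine ⟨hvu, hv, hu, g, c, hgm, ?_⟩
          rcases hvg with rfl | rfl <;> rcases hug with rfl | rfl
          · exact absurd rfl hvu
          · exact Or.inl ⟨rfl, rfl⟩
          · exact Or.inr ⟨rfl, rfl⟩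
          · exact absurd rfl hvu

lemma projSub_connected {n : ℕ} {C : (DiamondGraph (n+1)).Subgraph}
    (hC : IsCycleSubgraph C) : (projSub C).Connected := by
  rw [SimpleGraph.Subgraph.connected_iff]
  constructor
  · rw [SimpleGraph.Subgraph.preconnected_iff]
    rintro ⟨v, hv⟩ ⟨w, hw⟩
    obtain ⟨p⟩ := hC.1.coe ⟨Sum.inl v, hv⟩ ⟨Sum.inl w, hw⟩
    exact projSub_reach p.length _ _ p le_rfl v w hv hw rfl rfl
  · obtain ⟨x, hx⟩ := hC.1.nonempty
    rcases hxs : x with v | ⟨g, c⟩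
    · exact ⟨v, by subst hxs; exact hx⟩
    · subst hxs
      exact ⟨(diamond n).src g, C.edge_vert ((cyc_adj_inr hC hx).1).symm⟩

lemma projSub_cycle {n : ℕ} {C : (DiamondGraph (n+1)).Subgraph}
    (hC : IsCycleSubgraph C) (hnq : NonQuad C) : IsCycleSubgraph (projSub C) :=
  ⟨projSub_connected hC, fun _ hv => projSub_degree hC hnq hv⟩
/-- Counting: a cycle in `D_{n+1}` has twice as many vertices as its projection. -/
lemma cyc_card {n : ℕ} {C : (DiamondGraph (n+1)).Subgraph} (hC : IsCycleSubgraph C) :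
    C.verts.ncard = 2 * (projSub C).verts.ncard := by
  classical
  set Sl : Set ((diamond (n+1)).V) := {x | x ∈ C.verts ∧ ∃ v, x = Sum.inl v} with hSl_def
  set Sr : Set ((diamond (n+1)).V) := {x | x ∈ C.verts ∧ ∃ p, x = Sum.inr p} with hSr_def
  have hnbl : ∀ x ∈ Sl, ∀ y, C.Adj x y → y ∈ Sr := by
    rintro x ⟨hx, v, rfl⟩ y hxy
    obtain ⟨f, b, rfl, -⟩ := adj_inl_iff.1 (C.adj_sub hxy)
    exact ⟨C.edge_vert hxy.symm, _, rfl⟩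
  have hnbr : ∀ x ∈ Sr, ∀ y, C.Adj x y → y ∈ Sl := by
    rintro x ⟨hx, ⟨f, b⟩, rfl⟩ y hxy
    rcases adj_inr_iff.1 (C.adj_sub hxy) with rfl | rfl <;>
      exact ⟨C.edge_vert hxy.symm, _, rfl⟩
  have hunion : C.verts = Sl ∪ Sr := by
    ext x
    constructor
    · intro hx
      rcases hxs : x with v | p
      · exact Or.inl ⟨hxs ▸ hx, v, rfl⟩
      · exact Or.inr ⟨hxs ▸ hx, p, rfl⟩
    · rintro (⟨hx, -⟩ | ⟨hx, -⟩) <;> exact hx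
  have hdisj : Disjoint Sl Sr := by
    rw [Set.disjoint_left]
    rintro x ⟨-, v, rfl⟩ ⟨-, p, h⟩
    exact dinl_ne_inr h
  have hSl_proj : Sl = Sum.inl '' (projSub C).verts := by
    ext x
    constructor
    · rintro ⟨hx, v, rfl⟩; exact ⟨v, hx, rfl⟩
    · rintro ⟨v, hv, rfl⟩; exact ⟨hv, v, rfl⟩
  -- double counting
  have hflF : (Set.toFinite Sl).toFinset.card = (Set.toFinite Sr).toFinset.card := by
    set F : Set ((diamond (n+1)).V × (diamond (n+1)).V) := {p | p.1 ∈ Sl ∧ C.Adj p.1 p.2}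
      with hF_def
    have hdeg : ∀ x ∈ C.verts, ((C.neighborSet x).toFinite.toFinset).card = 2 := by
      intro x hx
      rw [← Set.ncard_eq_toFinset_card _ (Set.toFinite _)]
      exact hC.2 x hx
    have h1 : (Set.toFinite F).toFinset.card = 2 * (Set.toFinite Sl).toFinset.card := by
      rw [Finset.card_eq_sum_card_fiberwise (f := Prod.fst) (t := (Set.toFinite Sl).toFinset)
        (by rintro p hp; simp only [Finset.mem_coe, Set.Finite.mem_toFinset] at hp ⊢; exact hp.1)]
      rw [Finset.sum_congr rfl (g := fun _ => 2), Finset.sum_const, smul_eq_mul, mul_comm]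
      intro a ha
      rw [Set.Finite.mem_toFinset] at ha
      have himg : ((Set.toFinite F).toFinset.filter (fun p => p.1 = a)) =
          Finset.image (fun y => (a, y)) ((C.neighborSet a).toFinite.toFinset) := by
        ext ⟨p1, p2⟩
        simp only [Finset.mem_filter, Set.Finite.mem_toFinset, Finset.mem_image]
        constructor
        · rintro ⟨⟨h1, h2⟩, rfl⟩
          exact ⟨p2, h2, rfl⟩
        · rintro ⟨y, hy, heq⟩
          obtain ⟨rfl, rfl⟩ := Prod.mk.injEq .. ▸ heq
          exact ⟨⟨ha, hy⟩, rfl⟩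
      rw [himg, Finset.card_image_of_injective _ (fun y y' h => (Prod.mk.injEq .. ▸ h).2)]
      exact hdeg a ha.1
    have h2 : (Set.toFinite F).toFinset.card = 2 * (Set.toFinite Sr).toFinset.card := by
      rw [Finset.card_eq_sum_card_fiberwise (f := Prod.snd) (t := (Set.toFinite Sr).toFinset)
        (by rintro p hp; simp only [Finset.mem_coe, Set.Finite.mem_toFinset] at hp ⊢
            exact hnbl p.1 hp.1 p.2 hp.2)]
      rw [Finset.sum_congr rfl (g := fun _ => 2), Finset.sum_const, smul_eq_mul, mul_comm]
      intro b hb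
      rw [Set.Finite.mem_toFinset] at hb
      have himg : ((Set.toFinite F).toFinset.filter (fun p => p.2 = b)) =
          Finset.image (fun x => (x, b)) ((C.neighborSet b).toFinite.toFinset) := by
        ext ⟨p1, p2⟩
        simp only [Finset.mem_filter, Set.Finite.mem_toFinset, Finset.mem_image]
        constructor
        · rintro ⟨⟨h1, h2⟩, rfl⟩
          exact ⟨p1, h2.symm, rfl⟩
        · rintro ⟨y, hy, heq⟩
          obtain ⟨rfl, rfl⟩ := Prod.mk.injEq .. ▸ heq
          have hadj : C.Adj b y := hy
          exact ⟨⟨hnbr b hb y hadj, hadj.symm⟩, rfl⟩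
      rw [himg, Finset.card_image_of_injective _ (fun y y' h => (Prod.mk.injEq .. ▸ h).1)]
      exact hdeg b hb.1
    omega
  have hSl_card : Sl.ncard = (projSub C).verts.ncard := by
    rw [hSl_proj, Set.ncard_image_of_injective _ Sum.inl_injective]
  rw [hunion, Set.ncard_union_eq hdisj (Set.toFinite _) (Set.toFinite _),
    Set.ncard_eq_toFinset_card _ (Set.toFinite Sl), Set.ncard_eq_toFinset_card _ (Set.toFinite Sr),
    ← hflF, ← Set.ncard_eq_toFinset_card _ (Set.toFinite Sl), hSl_card]
  ring
/-- Definitional unfoldings for subdiamond data. -/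
lemma subdiaTop_succ (k j : ℕ) (e : (diamond k).E) :
    subdiaTop k (j+1) e = Sum.inl (subdiaTop k j e) := rfl

lemma subdiaBot_succ (k j : ℕ) (e : (diamond k).E) :
    subdiaBot k (j+1) e = Sum.inl (subdiaBot k j e) := rfl

lemma subdiaTop_zero (k : ℕ) (e : (diamond k).E) : subdiaTop k 0 e = (diamond k).tgt e := rfl

lemma subdiaBot_zero (k : ℕ) (e : (diamond k).E) : subdiaBot k 0 e = (diamond k).src e := rfl

lemma subdiaLeft_succ (k j : ℕ) (e : (diamond k).E) :
    subdiaLeft k (j+1) e = Sum.inl (subdiaLeft k j e) := rfl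

lemma subdiaRight_succ (k j : ℕ) (e : (diamond k).E) :
    subdiaRight k (j+1) e = Sum.inl (subdiaRight k j e) := rfl

lemma subdiaLeft_zero (k : ℕ) (e : (diamond k).E) : subdiaLeft k 0 e = Sum.inr (e, false) := rfl

lemma subdiaRight_zero (k : ℕ) (e : (diamond k).E) : subdiaRight k 0 e = Sum.inr (e, true) := rfl

lemma mem_subdiaEdges_succ (k j : ℕ) (e : (diamond k).E) (f : (diamond (k+j)).E) (i : Fin 4) :
    ((f, i) : (diamond (k+(j+1))).E) ∈ subdiaEdges k (j+1) e ↔ f ∈ subdiaEdges k j e := Iff.rfl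

lemma mem_subdiaEdges_zero (k : ℕ) (e f : (diamond k).E) :
    f ∈ subdiaEdges k 0 e ↔ f = e := Iff.rfl

/-- The four distinguished vertices of a subdiamond are pairwise distinct. -/
lemma subdia_distinct (k : ℕ) (e : (diamond k).E) : ∀ j : ℕ,
    subdiaTop k (j+1) e ≠ subdiaBot k (j+1) e ∧
    subdiaTop k (j+1) e ≠ subdiaLeft k j e ∧
    subdiaTop k (j+1) e ≠ subdiaRight k j e ∧
    subdiaBot k (j+1) e ≠ subdiaLeft k j e ∧
    subdiaBot k (j+1) e ≠ subdiaRight k j e ∧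
    subdiaLeft k j e ≠ subdiaRight k j e := by
  intro j
  induction j with
  | zero =>
    refine ⟨?_, ?_, ?_, ?_, ?_, ?_⟩
    · rw [subdiaTop_succ, subdiaBot_succ, subdiaTop_zero, subdiaBot_zero]
      simp [(src_ne_tgt k e).symm]
    · rw [subdiaTop_succ, subdiaLeft_zero]; exact dinl_ne_inr
    · rw [subdiaTop_succ, subdiaRight_zero]; exact dinl_ne_inr
    · rw [subdiaBot_succ, subdiaLeft_zero]; exact dinl_ne_inr
    · rw [subdiaBot_succ, subdiaRight_zero]; exact dinl_ne_inr
    · rw [subdiaLeft_zero, subdiaRight_zero]; simp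
  | succ j ih =>
    obtain ⟨h1, h2, h3, h4, h5, h6⟩ := ih
    exact ⟨fun h => h1 (dinl_inj.1 h), fun h => h2 (dinl_inj.1 h), fun h => h3 (dinl_inj.1 h),
      fun h => h4 (dinl_inj.1 h), fun h => h5 (dinl_inj.1 h), fun h => h6 (dinl_inj.1 h)⟩

/-- If an edge of `D_{n+1}` has `inr (f, b)` as an endpoint, its first component is `f`. -/
lemma edge_fst_of_inr {n : ℕ} {g : (diamond n).E} {i : Fin 4} {f : (diamond n).E} {b : Bool}
    (h : (diamond (n+1)).src (g, i) = Sum.inr (f, b) ∨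
         (diamond (n+1)).tgt (g, i) = Sum.inr (f, b)) : g = f := by
  rw [dsrc, dtgt] at h
  rcases (by omega : i.val = 0 ∨ i.val = 1 ∨ i.val = 2 ∨ i.val = 3) with hi|hi|hi|hi <;>
    simp [hi] at h <;> tauto

/-- Given an `inl`-endpoint of `g` and a subdivision vertex of `g`, produce the connecting
edge of `D_{n+1}`. -/
lemma edge_of_shape {n : ℕ} (g : (diamond n).E) (c : Bool) (u : (diamond (n+1)).V)
    (hu : u = Sum.inl ((diamond n).src g) ∨ u = Sum.inl ((diamond n).tgt g)) :
    ∃ i : Fin 4, ((diamond (n+1)).src (g, i) = u ∧ (diamond (n+1)).tgt (g, i) = Sum.inr (g, c)) ∨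
      ((diamond (n+1)).src (g, i) = Sum.inr (g, c) ∧ (diamond (n+1)).tgt (g, i) = u) := by
  rcases hu with rfl | rfl <;> rcases c
  · exact ⟨⟨0, by omega⟩, Or.inl ⟨rfl, rfl⟩⟩
  · exact ⟨⟨2, by omega⟩, Or.inl ⟨rfl, rfl⟩⟩
  · exact ⟨⟨1, by omega⟩, Or.inr ⟨rfl, rfl⟩⟩
  · exact ⟨⟨3, by omega⟩, Or.inr ⟨rfl, rfl⟩⟩
lemma edge_ends_mem {n : ℕ} (g : (diamond n).E) (i : Fin 4) (x : (diamond (n+1)).V)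
    (h : (diamond (n+1)).src (g, i) = x ∨ (diamond (n+1)).tgt (g, i) = x) :
    x ∈ ({Sum.inl ((diamond n).src g), Sum.inl ((diamond n).tgt g),
      Sum.inr (g, false), Sum.inr (g, true)} : Set ((diamond (n+1)).V)) := by
  rw [dsrc, dtgt] at h
  rcases (by omega : i.val = 0 ∨ i.val = 1 ∨ i.val = 2 ∨ i.val = 3) with hi|hi|hi|hi <;>
    simp only [hi] at h <;> simp at h <;> rcases h with rfl | rfl <;> simp

lemma principal_verts_zero {k : ℕ} {e : (diamond k).E} {C : (DiamondGraph (k+(0+1))).Subgraph}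
    (h : IsPrincipalCycle k 0 e C) :
    C.verts = {Sum.inl ((diamond k).src e), Sum.inl ((diamond k).tgt e),
      Sum.inr (e, false), Sum.inr (e, true)} := by
  obtain ⟨hC, hedge, htop, hbot, hleft, hright⟩ := h
  apply Set.Subset.antisymm
  · intro x hx
    have h2 := hC.2 x hx
    have hne : (C.neighborSet x).Nonempty := by
      apply Set.nonempty_of_ncard_ne_zero; omega
    obtain ⟨y, hy⟩ := hne
    obtain ⟨e', he'm, hor⟩ := hedge x y hy
    obtain ⟨g, i⟩ := e'
    have hge : g = e := (mem_subdiaEdges_zero k e g).1 ((mem_subdiaEdges_succ k 0 e g i).1 he'm)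
    subst hge
    exact edge_ends_mem g i x (hor.imp And.left And.right)
  · rintro x (rfl | rfl | rfl | hx)
    · exact hbot
    · exact htop
    · exact hleft
    · rw [Set.mem_singleton_iff] at hx; subst hx; exact hright

lemma principal_count {k : ℕ} {e : (diamond k).E} :
    ∀ (j : ℕ) (C : (DiamondGraph (k+(j+1))).Subgraph), IsPrincipalCycle k j e C →
      C.verts.ncard = 2^(j+2) := by
  intro j
  induction j with
  | zero =>
    intro C h
    rw [principal_verts_zero h]
    rw [Set.ncard_insert_of_notMem (by simp [src_ne_tgt k e]) (Set.toFinite _),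
      Set.ncard_insert_of_notMem (by simp) (Set.toFinite _),
      Set.ncard_pair (by simp)]
    norm_num
  | succ j ih =>
    intro C h
    obtain ⟨hC, hedge, htop, hbot, hleft, hright⟩ := h
    have hnq : NonQuad (n := k + (j+1)) C := by
      rintro f ⟨h0, h1⟩
      have hQ := quad_verts hC h0 h1
      rw [subdiaTop_succ] at htop
      rw [subdiaBot_succ] at hbot
      rw [subdiaLeft_succ] at hleft
      rw [hQ] at htop hbot hleft
      obtain ⟨hd1, hd2, -, hd4, -, -⟩ := subdia_distinct k e j
      have hX : subdiaTop k (j+1) e = (diamond (k+(j+1))).src f ∨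
          subdiaTop k (j+1) e = (diamond (k+(j+1))).tgt f := by
        rcases htop with h' | h' | h' | h'
        · exact Or.inl (dinl_inj.1 h')
        · exact Or.inr (dinl_inj.1 h')
        · exact absurd h' dinl_ne_inr
        · rw [Set.mem_singleton_iff] at h'; exact absurd h' dinl_ne_inr
      have hY : subdiaBot k (j+1) e = (diamond (k+(j+1))).src f ∨
          subdiaBot k (j+1) e = (diamond (k+(j+1))).tgt f := by
        rcases hbot with h' | h' | h' | h'
        · exact Or.inl (dinl_inj.1 h')
        · exact Or.inr (dinl_inj.1 h')
        · exact absurd h' dinl_ne_inr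
        · rw [Set.mem_singleton_iff] at h'; exact absurd h' dinl_ne_inr
      have hZ : subdiaLeft k j e = (diamond (k+(j+1))).src f ∨
          subdiaLeft k j e = (diamond (k+(j+1))).tgt f := by
        rcases hleft with h' | h' | h' | h'
        · exact Or.inl (dinl_inj.1 h')
        · exact Or.inr (dinl_inj.1 h')
        · exact absurd h' dinl_ne_inr
        · rw [Set.mem_singleton_iff] at h'; exact absurd h' dinl_ne_inr
      rcases hX with hX | hX <;> rcases hY with hY | hY <;> rcases hZ with hZ | hZ
      · exact hd1 (hX.trans hY.symm)
      · exact hd1 (hX.trans hY.symm)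
      · exact hd2 (hX.trans hZ.symm)
      · exact hd4 (hY.trans hZ.symm)
      · exact hd4 (hY.trans hZ.symm)
      · exact hd2 (hX.trans hZ.symm)
      · exact hd1 (hX.trans hY.symm)
      · exact hd1 (hX.trans hY.symm)
    have hC' : IsCycleSubgraph (projSub C) := projSub_cycle hC hnq
    have hP' : IsPrincipalCycle k j e (projSub C) := by
      refine ⟨hC', ?_, htop, hbot, hleft, hright⟩
      rintro u v ⟨hne, hu, hv, f, b, hm, hor⟩
      have hadj : C.Adj (Sum.inr (f, b)) (Sum.inl ((diamond (k+(j+1))).src f)) :=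
        (cyc_adj_inr hC hm).1
      obtain ⟨e'', he''m, hor''⟩ := hedge _ _ hadj
      obtain ⟨g, i⟩ := e''
      have hgf : g = f := edge_fst_of_inr (hor''.imp And.left And.right)
      subst hgf
      exact ⟨g, (mem_subdiaEdges_succ k (j+1) e g i).1 he''m, hor⟩
    have hcount := ih (projSub C) hP'
    rw [cyc_card hC, hcount, pow_succ]
    ring
/-- Lifting walks doubles length. -/
lemma lift_walk {n : ℕ} {u v : (diamond n).V} (p : (DiamondGraph n).Walk u v) :
    ∃ q : (DiamondGraph (n+1)).Walk (Sum.inl u) (Sum.inl v), q.length = 2 * p.length := by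
  induction p with
  | nil => exact ⟨SimpleGraph.Walk.nil, by simp⟩
  | @cons u w v h p ih =>
    obtain ⟨q, hq⟩ := ih
    obtain ⟨hne, f, hor⟩ := (tsg_adj _ _ _).1 h
    rcases hor with ⟨h1, h2⟩ | ⟨h1, h2⟩
    · subst h1; subst h2
      refine ⟨SimpleGraph.Walk.cons (adj_src f false)
        (SimpleGraph.Walk.cons ((adj_tgt f false).symm) q), ?_⟩
      simp [SimpleGraph.Walk.length_cons, hq]; ring
    · subst h1; subst h2
      refine ⟨SimpleGraph.Walk.cons (adj_tgt f false)
        (SimpleGraph.Walk.cons ((adj_src f false).symm) q), ?_⟩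
      simp [SimpleGraph.Walk.length_cons, hq]; ring

lemma lift_reach {n : ℕ} {u v : (diamond n).V} (h : (DiamondGraph n).Reachable u v) :
    (DiamondGraph (n+1)).Reachable (Sum.inl u) (Sum.inl v) := by
  obtain ⟨p⟩ := h
  obtain ⟨q, -⟩ := lift_walk p
  exact ⟨q⟩

/-- Projecting walks at least halves length. -/
lemma proj_walk {n : ℕ} : ∀ (N : ℕ) (x y : (diamond (n+1)).V)
    (q : (DiamondGraph (n+1)).Walk x y), q.length ≤ N →
    ∀ (u v : (diamond n).V), x = Sum.inl u → y = Sum.inl v →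
    ∃ p : (DiamondGraph n).Walk u v, 2 * p.length ≤ q.length := by
  intro N
  induction N with
  | zero =>
    intro x y q hlen u v hx hy
    cases q with
    | nil =>
      obtain rfl : u = v := dinl_inj.1 (hx ▸ hy ▸ rfl)
      exact ⟨SimpleGraph.Walk.nil, by simp⟩
    | cons h q => simp [SimpleGraph.Walk.length_cons] at hlen
  | succ N ih =>
    intro x y q hlen u v hx hy
    cases q with
    | nil =>
      obtain rfl : u = v := dinl_inj.1 (hx ▸ hy ▸ rfl)
      exact ⟨SimpleGraph.Walk.nil, by simp⟩
    | @cons _ z _ h q' =>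
      subst hx
      obtain ⟨g, c, hz, hug⟩ := adj_inl_iff.1 h
      subst hz
      cases q' with
      | nil => exact absurd hy dinr_ne_inl
      | @cons _ z2 _ h2 q2 =>
        obtain ⟨w, hz2, hwg⟩ : ∃ w, z2 = Sum.inl w ∧
            (w = (diamond n).src g ∨ w = (diamond n).tgt g) := by
          rcases adj_inr_iff.1 h2 with h' | h'
          · exact ⟨_, h', Or.inl rfl⟩
          · exact ⟨_, h', Or.inr rfl⟩
        subst hz2
        have hlen2 : q2.length ≤ N := by
          simp [SimpleGraph.Walk.length_cons] at hlen; omega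
        obtain ⟨p2, hp2⟩ := ih _ _ q2 hlen2 w v rfl hy
        rcases eq_or_ne u w with rfl | huw
        · exact ⟨p2, by simp [SimpleGraph.Walk.length_cons]; omega⟩
        · have hadj : (DiamondGraph n).Adj u w := by
            refine (tsg_adj _ _ _).2 ⟨huw, g, ?_⟩
            rcases hug with rfl | rfl <;> rcases hwg with rfl | rfl
            · exact absurd rfl huw
            · exact Or.inl ⟨rfl, rfl⟩
            · exact Or.inr ⟨rfl, rfl⟩
            · exact absurd rfl huw
          exact ⟨SimpleGraph.Walk.cons hadj p2,
            by simp [SimpleGraph.Walk.length_cons]; omega⟩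

/-- Distances double under the inclusion `D_n ↪ D_{n+1}`. -/
lemma dist_inl {n : ℕ} {u v : (diamond n).V} (hr : (DiamondGraph n).Reachable u v) :
    (DiamondGraph (n+1)).dist (Sum.inl u) (Sum.inl v) = 2 * (DiamondGraph n).dist u v := by
  apply le_antisymm
  · obtain ⟨p, hp⟩ := hr.exists_walk_length_eq_dist
    obtain ⟨q, hq⟩ := lift_walk p
    calc (DiamondGraph (n+1)).dist (Sum.inl u) (Sum.inl v) ≤ q.length :=
          SimpleGraph.dist_le q
      _ = 2 * (DiamondGraph n).dist u v := by rw [hq, hp]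
  · obtain ⟨q, hq⟩ := (lift_reach hr).exists_walk_length_eq_dist
    obtain ⟨p, hp⟩ := proj_walk q.length _ _ q le_rfl u v rfl rfl
    calc 2 * (DiamondGraph n).dist u v ≤ 2 * p.length := by
          have := SimpleGraph.dist_le p; omega
      _ ≤ q.length := hp
      _ = _ := hq

lemma reach_incl {k : ℕ} {u v : (diamond k).V} (h : (DiamondGraph k).Reachable u v) :
    ∀ j : ℕ, (DiamondGraph (k+j)).Reachable (inclV k j u) (inclV k j v) := by
  intro j
  induction j with
  | zero => exact h
  | succ j ih => exact lift_reach ih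

lemma dist_incl {k : ℕ} {u v : (diamond k).V} (h : (DiamondGraph k).Reachable u v) :
    ∀ j : ℕ, (DiamondGraph (k+j)).dist (inclV k j u) (inclV k j v)
      = 2^j * (DiamondGraph k).dist u v := by
  intro j
  induction j with
  | zero => simp [inclV]
  | succ j ih =>
    have : (DiamondGraph (k+(j+1))).dist (Sum.inl (inclV k j u)) (Sum.inl (inclV k j v))
        = 2 * (DiamondGraph (k+j)).dist (inclV k j u) (inclV k j v) :=
      dist_inl (reach_incl h j)
    rw [show inclV k (j+1) u = Sum.inl (inclV k j u) from rfl,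
      show inclV k (j+1) v = Sum.inl (inclV k j v) from rfl, this, ih, pow_succ]
    ring

/-- The height of a subdiamond. -/
lemma dist_top_bot (k j : ℕ) (e : (diamond k).E) :
    (DiamondGraph (k+(j+1))).dist (subdiaTop k (j+1) e) (subdiaBot k (j+1) e) = 2^(j+1) := by
  have hadj : (DiamondGraph k).Adj ((diamond k).tgt e) ((diamond k).src e) :=
    (tsg_adj _ _ _).2 ⟨(src_ne_tgt k e).symm, e, Or.inr ⟨rfl, rfl⟩⟩
  have hd1 : (DiamondGraph k).dist ((diamond k).tgt e) ((diamond k).src e) = 1 :=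
    SimpleGraph.dist_eq_one_iff_adj.2 hadj
  have := dist_incl (u := (diamond k).tgt e) (v := (diamond k).src e) hadj.reachable (j+1)
  rw [hd1, mul_one] at this
  exact this
/-- Every cycle `C` in `D_n` is a principal cycle of one of the
subdiamonds of `D_n`, and every principal cycle of a subdiamond of height `2^t` has
length `2^{t+1}`. -/
theorem cycles_in_diamonds (n : ℕ) :
    (∀ C : (DiamondGraph n).Subgraph, IsCycleSubgraph C →
      ∃ (k j : ℕ) (h : k + (j + 1) = n) (e : (diamond k).E),
        IsPrincipalCycle k j e
          (cast (congrArg (fun m => (DiamondGraph m).Subgraph) h.symm) C)) ∧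
    (∀ (k j : ℕ) (e : (diamond k).E) (C : (DiamondGraph (k + (j + 1))).Subgraph) (t : ℕ),
      IsPrincipalCycle k j e C →
      (DiamondGraph (k + (j + 1))).dist (subdiaTop k (j + 1) e) (subdiaBot k (j + 1) e)
        = 2 ^ t →
      C.verts.ncard = 2 ^ (t + 1)) := by
  constructor
  · induction n with
    | zero =>
      intro C hC
      exfalso
      obtain ⟨x, hx⟩ := hC.1.nonempty
      have h2 := hC.2 x hx
      have hsub : C.neighborSet x ⊆ {!x} := by
        intro y hy
        have hne := (C.adj_sub hy).ne
        have : y ≠ x := fun h => hne h.symm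
        revert this
        show y ≠ x → y ∈ ({!x} : Set Bool)
        cases x <;> cases y <;> simp
      have := Set.ncard_le_ncard hsub (Set.toFinite _)
      rw [h2, Set.ncard_singleton] at this
      omega
    | succ n ih =>
      intro C hC
      by_cases hq : ∃ f, Sum.inr (f, false) ∈ C.verts ∧ Sum.inr (f, true) ∈ C.verts
      · obtain ⟨f, h0, h1⟩ := hq
        have hQ := quad_verts hC h0 h1
        refine ⟨n, 0, rfl, f, ?_⟩
        show IsPrincipalCycle n 0 f C
        refine ⟨hC, ?_, ?_, ?_, ?_, ?_⟩
        · intro u v huv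
          rcases adj_succ (C.adj_sub huv) with ⟨g, c, ⟨hu_or, rfl⟩ | ⟨hv_or, rfl⟩⟩
          · have hm : Sum.inr (g, c) ∈ C.verts := C.edge_vert huv.symm
            rw [hQ] at hm
            have hgf : g = f := by
              rcases hm with hm | hm | hm | hm
              · exact absurd hm dinr_ne_inl
              · exact absurd hm dinr_ne_inl
              · exact (dpair_ext.1 (dinr_inj.1 hm)).1
              · rw [Set.mem_singleton_iff] at hm
                exact (dpair_ext.1 (dinr_inj.1 hm)).1
            subst hgf
            obtain ⟨i, hi⟩ := edge_of_shape g c u hu_or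
            exact ⟨(g, i), (mem_subdiaEdges_succ n 0 g g i).2 rfl, hi⟩
          · have hm : Sum.inr (g, c) ∈ C.verts := C.edge_vert huv
            rw [hQ] at hm
            have hgf : g = f := by
              rcases hm with hm | hm | hm | hm
              · exact absurd hm dinr_ne_inl
              · exact absurd hm dinr_ne_inl
              · exact (dpair_ext.1 (dinr_inj.1 hm)).1
              · rw [Set.mem_singleton_iff] at hm
                exact (dpair_ext.1 (dinr_inj.1 hm)).1
            subst hgf
            obtain ⟨i, hi⟩ := edge_of_shape g c v hv_or
            exact ⟨(g, i), (mem_subdiaEdges_succ n 0 g g i).2 rfl, hi.symm⟩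
        · show Sum.inl ((diamond n).tgt f) ∈ C.verts
          rw [hQ]; simp
        · show Sum.inl ((diamond n).src f) ∈ C.verts
          rw [hQ]; simp
        · show Sum.inr (f, false) ∈ C.verts
          exact h0
        · show Sum.inr (f, true) ∈ C.verts
          exact h1
      · have hnq : NonQuad C := fun f hf => hq ⟨f, hf⟩
        obtain ⟨k, j, hkj, e, hP⟩ := ih (projSub C) (projSub_cycle hC hnq)
        subst hkj
        have hP' : IsPrincipalCycle k j e (projSub C) := hP
        refine ⟨k, j+1, rfl, e, ?_⟩
        show IsPrincipalCycle k (j+1) e C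
        refine ⟨hC, ?_, hP'.2.2.1, hP'.2.2.2.1, hP'.2.2.2.2.1, hP'.2.2.2.2.2⟩
        intro u v huv
        have key : ∀ (g : (diamond (k+(j+1))).E) (c : Bool), Sum.inr (g, c) ∈ C.verts →
            g ∈ subdiaEdges k (j+1) e := by
          intro g c hm
          have hCg : (projSub C).Adj ((diamond (k+(j+1))).src g) ((diamond (k+(j+1))).tgt g) :=
            ⟨src_ne_tgt _ g, C.edge_vert ((cyc_adj_inr hC hm).1).symm,
              C.edge_vert ((cyc_adj_inr hC hm).2).symm, g, c, hm, Or.inl ⟨rfl, rfl⟩⟩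
          obtain ⟨e₀, he₀m, hor₀⟩ := hP'.2.1 _ _ hCg
          rcases hor₀ with ⟨ha, hb⟩ | ⟨ha, hb⟩
          · have : e₀ = g := edge_eq_of_ends _ _ _ ha hb
            exact this ▸ he₀m
          · exact absurd (edge_no_flip _ e₀ g ha hb) not_false
        rcases adj_succ (C.adj_sub huv) with ⟨g, c, ⟨hu_or, rfl⟩ | ⟨hv_or, rfl⟩⟩
        · have hm : Sum.inr (g, c) ∈ C.verts := C.edge_vert huv.symm
          obtain ⟨i, hi⟩ := edge_of_shape g c u hu_or
          exact ⟨(g, i), (mem_subdiaEdges_succ k (j+1) e g i).2 (key g c hm), hi⟩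
        · have hm : Sum.inr (g, c) ∈ C.verts := C.edge_vert huv
          obtain ⟨i, hi⟩ := edge_of_shape g c v hv_or
          exact ⟨(g, i), (mem_subdiaEdges_succ k (j+1) e g i).2 (key g c hm), hi.symm⟩
  · intro k j e C t hP hdist
    have hd := dist_top_bot k j e
    have hpow : 2^t = 2^(j+1) := hdist.symm.trans hd
    have ht : t = j + 1 := Nat.pow_right_injective (le_refl 2) hpow
    subst ht
    exact principal_count j C hP
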